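/- Let X be a topological manifold whose (holomorphic) automorphism group G is a σ-compact topological group acting continuously on X. Then X does not admit any tame infinite discrete subset: for every infinite discrete subset D = {p_n : n ∈ ℕ} and every exhaustion function ρ there is a map ζ: D → ℝ≥0 such that no automorphism φ ∈ G satisfies ρ(φ(p_n)) ≥ ζ(p_n) for all n. -/

import Mathlib

/-- A topological manifold whose automorphism group is a σ-compact
topological group acting continuously admits no tame infinite discrete subset. -/
theorem stmt1 {d : ℕ} {X : Type*} [TopologicalSpace X]
    [ChartedSpace (EuclideanSpace ℝ (Fin d)) X]
    {G : Type*} [Group G] [TopologicalSpace G] [IsTopologicalGroup G]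
    [SigmaCompactSpace G] [MulAction G X]
    (hcont : Continuous fun p : G × X => p.1 • p.2)
    (p : ℕ → X) (hpinj : Function.Injective p)
    (hpclosed : IsClosed (Set.range p)) (hpdisc : DiscreteTopology (Set.range p))
    (ρ : X → ℝ)
    (hρ : Continuous ρ ∧ (∀ x, 0 ≤ ρ x) ∧ ∀ c : ℝ, IsCompact {x | ρ x ≤ c}) :
    ∃ ζ : ℕ → ℝ, (∀ n, 0 ≤ ζ n) ∧ ∀ g : G, ∃ n, ρ (g • p n) < ζ n := by
  refine ⟨fun n => max 0 (sSup ((fun g : G => ρ (g • p n)) '' compactCovering G n)) + 1,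
    fun n => by positivity, fun g => ?_⟩
  obtain ⟨n, hn⟩ := exists_mem_compactCovering g
  refine ⟨n, ?_⟩
  have hc : Continuous fun g : G => ρ (g • p n) :=
    hρ.1.comp (hcont.comp (continuous_id.prodMk continuous_const))
  have himg : IsCompact ((fun g : G => ρ (g • p n)) '' compactCovering G n) :=
    (isCompact_compactCovering G n).image hc
  have hle : ρ (g • p n) ≤ sSup ((fun g : G => ρ (g • p n)) '' compactCovering G n) :=
    le_csSup himg.bddAbove ⟨g, hn, rfl⟩
  calc ρ (g • p n) ≤ max 0 (sSup ((fun g : G => ρ (g • p n)) '' compactCovering G n)) :=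
        hle.trans (le_max_right _ _)
    _ < _ + 1 := by linarith
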